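/- Let V be a real vector space of dimension 2m+2 with a nondegenerate symmetric bilinear form g of Lorentzian signature (2m+1,1), and let N be a maximal totally null complex subspace of the complexification of V (with respect to the complex-bilinear extension of g). Then the intersection of N with its complex conjugate has complex dimension exactly one. -/

import Mathlib

/-- The orthogonal complement of a subspace with respect to a bilinear form. -/
def BilinOrthog {R M : Type*} [CommRing R] [AddCommGroup M] [Module R M]
    (g : M →ₗ[R] M →ₗ[R] R) (N : Submodule R M) : Submodule R M where
  carrier := {v | ∀ w ∈ N, g w v = 0}
  add_mem' := by intro x y hx hy w hw; simp [hx w hw, hy w hw]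
  zero_mem' := by intro w hw; simp
  smul_mem' := by intro c x hx w hw; simp [hx w hw]

lemma mem_bilinOrthog_iff {R M : Type*} [CommRing R] [AddCommGroup M] [Module R M]
    (g : M →ₗ[R] M →ₗ[R] R) (N : Submodule R M) (v : M) :
    v ∈ BilinOrthog g N ↔ ∀ w ∈ N, g w v = 0 := Iff.rfl

lemma bilinOrthog_eq_orthogonal {K M : Type*} [Field K] [AddCommGroup M] [Module K M]
    (g : M →ₗ[K] M →ₗ[K] K) (N : Submodule K M) :
    BilinOrthog g N = LinearMap.BilinForm.orthogonal g N := rfl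

instance : RingHomSurjective (starRingEnd ℂ) := ⟨fun x => ⟨star x, by simp⟩⟩

theorem real_index_one (m : ℕ) (W : Type*) [AddCommGroup W] [Module ℂ W]
    [FiniteDimensional ℂ W]
    (G : W →ₗ[ℂ] W →ₗ[ℂ] ℂ) (hsymm : ∀ v w, G v w = G w v)
    (conj : W →ₛₗ[starRingEnd ℂ] W)
    (hconj2 : ∀ v, conj (conj v) = v)
    (hGconj : ∀ v w, G (conj v) (conj w) = star (G v w))
    (e : Module.Basis (Fin (2 * m + 2)) ℂ W)
    (hereal : ∀ i, conj (e i) = e i)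
    (hGe : ∀ i j, G (e i) (e j) =
      if i = j then (if (i : ℕ) = 2 * m + 1 then (-1 : ℂ) else 1) else 0)
    (N : Submodule ℂ W) (hN : N = BilinOrthog G N) :
    Module.finrank ℂ ↥(N ⊓ N.comap conj) = 1 := by
  classical
  set ε : Fin (2 * m + 2) → ℂ := fun i => if (i : ℕ) = 2 * m + 1 then (-1 : ℂ) else 1 with hε
  have hεne : ∀ i, ε i ≠ 0 := by
    intro i; simp only [hε]; split <;> norm_num
  -- expansion of conj in coordinates
  have hconj_exp : ∀ v : W, conj v = ∑ j, star (e.repr v j) • e j := by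
    intro v
    conv_lhs => rw [← e.sum_repr v]
    rw [map_sum]
    refine Finset.sum_congr rfl fun j _ => ?_
    rw [LinearMap.map_smulₛₗ, hereal]
    rfl
  -- row computation
  have hrow : ∀ (v : W) (j : Fin (2 * m + 2)), G v (e j) = e.repr v j * ε j := by
    intro v j
    conv_lhs => rw [← e.sum_repr v]
    rw [map_sum, LinearMap.sum_apply]
    rw [Finset.sum_eq_single j]
    · rw [LinearMap.map_smul, LinearMap.smul_apply, hGe, if_pos rfl, smul_eq_mul]
    · intro i _ hij
      rw [LinearMap.map_smul, LinearMap.smul_apply, hGe, if_neg hij, smul_eq_mul, mul_zero]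
    · intro h; exact absurd (Finset.mem_univ j) h
  -- nondegeneracy
  have hnd : LinearMap.BilinForm.Nondegenerate G := by
    have hsl : LinearMap.SeparatingLeft G := by
      intro v hv
      refine e.ext_elem fun j => ?_
      have h1 := hrow v j
      rw [hv (e j)] at h1
      have := (mul_eq_zero.mp h1.symm).resolve_right (hεne j)
      simpa using this
    exact ⟨hsl, fun y hy => hsl y fun x => by rw [hsymm]; exact hy x⟩
  have hrefl : LinearMap.IsRefl G := fun x y h => by rw [hsymm y x]; exact h
  have hW : Module.finrank ℂ W = 2 * m + 2 := by
    rw [Module.finrank_eq_card_basis e, Fintype.card_fin]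
  -- rank of maximal totally null subspaces
  have hrank : ∀ M : Submodule ℂ W, M = BilinOrthog G M → Module.finrank ℂ M = m + 1 := by
    intro M hM
    have h1 := LinearMap.BilinForm.finrank_orthogonal hnd M
    rw [← bilinOrthog_eq_orthogonal, ← hM] at h1
    have h2 : Module.finrank ℂ M ≤ Module.finrank ℂ W := Submodule.finrank_le M
    omega
  -- total nullity of N
  have hnull : ∀ x ∈ N, ∀ y ∈ N, G x y = 0 := by
    intro x hx y hy
    have : y ∈ BilinOrthog G N := hN ▸ hy
    exact this x hx
  set Nbar : Submodule ℂ W := N.comap conj with hNbar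
  have hmemNbar : ∀ v : W, v ∈ Nbar ↔ conj v ∈ N := fun v => Iff.rfl
  -- Nbar is also maximal totally null
  have key : ∀ x y : W, G x y = 0 ↔ G (conj x) (conj y) = 0 := by
    intro x y
    rw [hGconj, star_eq_zero]
  have hNbarMTN : Nbar = BilinOrthog G Nbar := by
    ext v
    rw [hmemNbar, mem_bilinOrthog_iff]
    constructor
    · intro hv w hw
      rw [hmemNbar] at hw
      have h1 : G (conj w) (conj v) = 0 := (hN ▸ hv : conj v ∈ BilinOrthog G N) (conj w) hw
      exact (key w v).mpr h1
    · intro hv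
      rw [hN, mem_bilinOrthog_iff]
      intro w hw
      have h1 : G (conj w) v = 0 := hv (conj w) (by rw [hmemNbar, hconj2]; exact hw)
      have h2 := (key (conj w) v).mp h1
      rwa [hconj2] at h2
  -- upper bound
  set last : Fin (2 * m + 2) := ⟨2 * m + 1, by omega⟩ with hlast
  have hub : Module.finrank ℂ ↥(N ⊓ Nbar) ≤ 1 := by
    set K := N ⊓ Nbar with hK
    let f : K →ₗ[ℂ] ℂ := (e.coord last) ∘ₗ K.subtype
    have hinj : Function.Injective f := by
      rw [← LinearMap.ker_eq_bot]
      refine (Submodule.eq_bot_iff _).mpr fun x hx => ?_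
      have hfx : e.repr (x : W) last = 0 := hx
      obtain ⟨hxN, hxbar⟩ := x.2
      have h0 : G (x : W) (conj (x : W)) = 0 :=
        (hN ▸ hxbar : conj (x : W) ∈ BilinOrthog G N) (x : W) hxN
      rw [hconj_exp] at h0
      rw [map_sum] at h0
      have hterm : ∀ j, G (x : W) (star (e.repr (x : W) j) • e j)
          = (Complex.normSq (e.repr (x : W) j) : ℂ) := by
        intro j
        rw [LinearMap.map_smul, smul_eq_mul, hrow]
        by_cases hj : j = last
        · subst hj; rw [hfx]; simp
        · have : ε j = 1 := by
            simp only [hε]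
            rw [if_neg]
            intro hc
            exact hj (Fin.ext hc)
          rw [this, mul_one, mul_comm]
          exact Complex.mul_conj _
      rw [Finset.sum_congr rfl fun j _ => hterm j, ← Complex.ofReal_sum] at h0
      have hsum : ∑ j, Complex.normSq (e.repr (x : W) j) = 0 := by exact_mod_cast h0
      have hallz : ∀ j, e.repr (x : W) j = 0 := by
        intro j
        have hz := (Finset.sum_eq_zero_iff_of_nonneg
          (fun j _ => Complex.normSq_nonneg _)).mp hsum j (Finset.mem_univ j)
        exact Complex.normSq_eq_zero.mp hz
      have : (x : W) = 0 := e.ext_elem (by simpa using hallz)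
      exact Subtype.ext this
    calc Module.finrank ℂ ↥K ≤ Module.finrank ℂ ℂ :=
          LinearMap.finrank_le_finrank_of_injective hinj
      _ = 1 := Module.finrank_self ℂ
  -- lower bound
  have hlb : N ⊓ Nbar ≠ ⊥ := by
    intro h0
    -- N ⊔ Nbar = ⊤
    have hrN : Module.finrank ℂ N = m + 1 := hrank N hN
    have hrNbar : Module.finrank ℂ Nbar = m + 1 := hrank Nbar hNbarMTN
    have hsup : N ⊔ Nbar = ⊤ := by
      apply Submodule.eq_top_of_finrank_eq
      have := Submodule.finrank_sup_add_finrank_inf_eq N Nbar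
      rw [h0, finrank_bot, add_zero] at this
      rw [this, hrN, hrNbar, hW]; ring
    -- map conj N = Nbar
    have hmapconj : Submodule.map conj N = Nbar := by
      ext x
      simp only [Submodule.mem_map, hmemNbar]
      constructor
      · rintro ⟨y, hy, rfl⟩; rwa [hconj2]
      · intro hx; exact ⟨conj x, hx, hconj2 x⟩
    -- basis of N
    let bN : Module.Basis (Fin (m + 1)) ℂ N := Module.finBasisOfFinrankEq ℂ N hrN
    let u : Fin (m + 1) → W := fun i => (bN i : W)
    have huN : ∀ i, u i ∈ N := fun i => (bN i).2
    let v : (Fin (m + 1)) ⊕ (Fin (m + 1)) → W := Sum.elim u fun i => conj (u i)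
    have hspanu : Submodule.span ℂ (Set.range u) = N := by
      have h1 : Set.range u = N.subtype '' Set.range bN := by
        ext x; simp [u, Set.range_comp]
      rw [h1, ← Submodule.map_span, bN.span_eq, Submodule.map_top, Submodule.range_subtype]
    have hspanw : Submodule.span ℂ (Set.range fun i => conj (u i)) = Nbar := by
      have h1 : Set.range (fun i => conj (u i)) = conj '' Set.range u := by
        ext x; simp [Set.range_comp]
      rw [h1, Submodule.span_image, hspanu, hmapconj]
    have hsp : ⊤ ≤ Submodule.span ℂ (Set.range v) := by
      rw [Set.Sum.elim_range, Submodule.span_union, hspanu, hspanw, hsup]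
    have hcard : Fintype.card ((Fin (m + 1)) ⊕ (Fin (m + 1))) = Module.finrank ℂ W := by
      simp [hW]; ring
    let b : Module.Basis ((Fin (m + 1)) ⊕ (Fin (m + 1))) ℂ W :=
      basisOfTopLeSpanOfCardEqFinrank v hsp hcard
    have hb : ⇑b = v := coe_basisOfTopLeSpanOfCardEqFinrank v hsp hcard
    -- Gram matrix, block form
    let A : Matrix (Fin (m + 1)) (Fin (m + 1)) ℂ := Matrix.of fun i j => G (u i) (conj (u j))
    have hAherm : True := trivial
    let M : Matrix ((Fin (m + 1)) ⊕ (Fin (m + 1))) ((Fin (m + 1)) ⊕ (Fin (m + 1))) ℂ :=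
      Matrix.of fun i j => G (b i) (conj (b j))
    have hMblock : M = Matrix.fromBlocks A 0 0 (A.map (starRingEnd ℂ)) := by
      ext i j
      cases i with
      | inl i =>
        cases j with
        | inl j => simp [M, hb, v, A, Matrix.fromBlocks]
        | inr j =>
          have : G (u i) (conj (conj (u j))) = 0 := by
            rw [hconj2]; exact hnull _ (huN i) _ (huN j)
          simp [M, hb, v, Matrix.fromBlocks, this]
      | inr i =>
        cases j with
        | inl j =>
          have : G (conj (u i)) (conj (u j)) = 0 := by
            rw [hGconj, hnull _ (huN i) _ (huN j), star_zero]
          simp [M, hb, v, Matrix.fromBlocks, this]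
        | inr j =>
          have : G (conj (u i)) (conj (conj (u j))) = star (G (u i) (conj (u j))) :=
            hGconj _ _
          simp [M, hb, v, A, Matrix.fromBlocks, this]
    -- reindexed basis and transition matrix
    let σ : ((Fin (m + 1)) ⊕ (Fin (m + 1))) ≃ Fin (2 * m + 2) :=
      finSumFinEquiv.trans (finCongr (by omega))
    let b' : Module.Basis (Fin (2 * m + 2)) ℂ W := b.reindex σ
    let P : Matrix (Fin (2 * m + 2)) (Fin (2 * m + 2)) ℂ := e.toMatrix b'
    have hPexp : ∀ i, b' i = ∑ k, P k i • e k := by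
      intro i
      conv_lhs => rw [← e.sum_repr (b' i)]
      rfl
    have hPconj : ∀ i, conj (b' i) = ∑ k, star (P k i) • e k := by
      intro i
      rw [hconj_exp (b' i)]
      rfl
    let D : Matrix (Fin (2 * m + 2)) (Fin (2 * m + 2)) ℂ := Matrix.diagonal ε
    let M' : Matrix (Fin (2 * m + 2)) (Fin (2 * m + 2)) ℂ :=
      Matrix.of fun i j => G (b' i) (conj (b' j))
    have hM'eq : M' = P.transpose * D * P.map (starRingEnd ℂ) := by
      ext i j
      show G (b' i) (conj (b' j)) = _
      rw [hPconj j]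
      rw [map_sum]
      have hGrow : ∀ l, G (b' i) (star (P l j) • e l) = star (P l j) * (P l i * ε l) := by
        intro l
        rw [LinearMap.map_smul, smul_eq_mul, hrow]
        simp only [P, Module.Basis.toMatrix_apply]
      rw [Finset.sum_congr rfl fun l _ => hGrow l]
      show _ = ∑ l, (P.transpose * D) i l * (P.map (starRingEnd ℂ)) l j
      refine Finset.sum_congr rfl fun l _ => ?_
      have h1 : (P.transpose * D) i l = P l i * ε l := by
        rw [Matrix.mul_apply]
        rw [Finset.sum_eq_single l]
        · simp [D, Matrix.diagonal, Matrix.transpose_apply]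
        · intro k _ hk
          simp [D, Matrix.diagonal_apply_ne _ hk]
        · intro h; exact absurd (Finset.mem_univ l) h
      rw [h1]
      show star (P l j) * (P l i * ε l) = P l i * ε l * star (P l j)
      ring
    have hM'M : M'.det = M.det := by
      have : M' = M.submatrix σ.symm σ.symm := by
        ext i j
        show G (b' i) (conj (b' j)) = G (b (σ.symm i)) (conj (b (σ.symm j)))
        rw [Module.Basis.reindex_apply, Module.Basis.reindex_apply]
      rw [this, Matrix.det_submatrix_equiv_self]
    have hdetD : D.det = -1 := by
      rw [Matrix.det_diagonal]
      have h1 : ∀ i : Fin (2 * m + 2), ε i = if i = last then -1 else 1 := by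
        intro i
        simp only [hε]
        congr 1
        · simp [hlast, Fin.ext_iff]
      rw [Finset.prod_congr rfl fun i _ => h1 i, Finset.prod_ite_eq' Finset.univ last]
      simp
    have hdetP : P.det ≠ 0 := by
      have : e.det b' = P.det := Module.Basis.det_apply e b'
      rw [← this]
      exact (e.isUnit_det b').ne_zero
    -- two computations of det M'
    have hc1 : M'.det = -(P.det * star P.det) := by
      rw [hM'eq, Matrix.det_mul, Matrix.det_mul, Matrix.det_transpose, hdetD]
      have : (P.map (starRingEnd ℂ)).det = star P.det :=
        (RingHom.map_det (starRingEnd ℂ) P).symm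
      rw [this]; ring
    have hc2 : M'.det = A.det * star A.det := by
      rw [hM'M, hMblock, Matrix.det_fromBlocks_zero₂₁]
      congr 1
      exact (RingHom.map_det (starRingEnd ℂ) A).symm
    rw [hc2] at hc1
    have h1 : A.det * star A.det = (Complex.normSq A.det : ℂ) := Complex.mul_conj _
    have h2 : P.det * star P.det = (Complex.normSq P.det : ℂ) := Complex.mul_conj _
    rw [h1, h2] at hc1
    have h3 : (Complex.normSq A.det : ℝ) = -(Complex.normSq P.det) := by
      exact_mod_cast hc1
    have h4 : Complex.normSq P.det > 0 := Complex.normSq_pos.mpr hdetP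
    have h5 : Complex.normSq A.det ≥ 0 := Complex.normSq_nonneg _
    linarith
  have hne : Module.finrank ℂ ↥(N ⊓ Nbar) ≠ 0 := by
    intro h
    exact hlb (Submodule.finrank_eq_zero.mp h)
  omega
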